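/- Let [F_1],...,[F_n] be multiclass classifier classes with Natarajan dimensions d_i < ∞ over label spaces of sizes c_i, and let each f_i classify M_i instances. The binary class H = {(x,s) ↦ 1{σ((f_1(x_1),...,f_n(x_n))) ≠ s} : f_i ∈ [F_i]} has VC dimension at most 4 Σ_{i=1}^n (d_i log(M_i · n · d_i) + 2 d_i log c_i). -/

import Mathlib

/-- Binary shattering (all dichotomies realized). -/
def BShatters {A : Type*} (H : Set (A → Bool)) (C : Finset A) : Prop :=
  ∀ b : A → Bool, ∃ h ∈ H, ∀ x ∈ C, h x = b x

/-- Natarajan shattering for multiclass hypothesis classes. -/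
def NShatters {A B : Type*} (H : Set (A → B)) (C : Finset A) : Prop :=
  ∃ h₀ h₁ : A → B, (∀ x ∈ C, h₀ x ≠ h₁ x) ∧
    ∀ B' ⊆ C, ∃ h ∈ H, (∀ x ∈ B', h x = h₀ x) ∧ ∀ x ∈ C, x ∉ B' → h x = h₁ x

open Finset

open Finset

lemma chooseLePow (N k : ℕ) : N.choose k ≤ N ^ k := by
  induction k with
  | zero => simp
  | succ k ih =>
    have h1 : N.choose (k+1) ≤ N.choose (k+1) * (k+1) := Nat.le_mul_of_pos_right _ (Nat.succ_pos k)
    calc N.choose (k+1) ≤ N.choose (k+1) * (k+1) := h1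
      _ = N.choose k * (N - k) := Nat.choose_succ_right_eq N k
      _ ≤ N ^ k * N := Nat.mul_le_mul ih (Nat.sub_le _ _)
      _ = N ^ (k+1) := (pow_succ N k).symm

lemma sumChooseLe (d N : ℕ) : ∑ k ∈ range (d+1), N.choose k ≤ (N+1) ^ d := by
  induction d with
  | zero => simp
  | succ d ih =>
    rw [Finset.sum_range_succ]
    have h1 : N.choose (d+1) ≤ N ^ (d+1) := chooseLePow N (d+1)
    have h2 : N ^ (d+1) ≤ N * (N+1) ^ d := by
      rw [pow_succ, mul_comm]
      exact Nat.mul_le_mul_left N (Nat.pow_le_pow_left (Nat.le_succ N) d)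
    calc ∑ k ∈ range (d+1), N.choose k + N.choose (d+1)
        ≤ (N+1)^d + N * (N+1)^d := Nat.add_le_add ih (h1.trans h2)
      _ = (N+1)^(d+1) := by ring

lemma pascalSum (m d a : ℕ) :
    ∑ k ∈ range (d+2), (m+1).choose k * a^k
      = (∑ k ∈ range (d+2), m.choose k * a^k) + a * ∑ k ∈ range (d+1), m.choose k * a^k := by
  rw [Finset.sum_range_succ' (fun k => (m+1).choose k * a^k),
      Finset.sum_range_succ' (fun k => m.choose k * a^k), Finset.mul_sum]
  simp only [Nat.choose_succ_succ, add_mul, Finset.sum_add_distrib, Nat.choose_zero_right,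
    pow_zero, mul_one, pow_succ]
  have : ∀ x, m.choose x.succ = m.choose (x+1) := fun x => rfl
  simp only [this, Nat.add_comm 1 d]
  have h2 : ∑ x ∈ range (d+1), m.choose x * (a^x*a) = ∑ x ∈ range (d+1), a * (m.choose x * a^x) :=
    Finset.sum_congr rfl (fun x _ => by ring)
  omega

lemma sumChoosePowLe (d N a : ℕ) (ha : 1 ≤ a) :
    ∑ k ∈ range (d+1), N.choose k * a^k ≤ (a * (N+1)) ^ d := by
  calc ∑ k ∈ range (d+1), N.choose k * a^k
      ≤ ∑ k ∈ range (d+1), N.choose k * a^d := by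
        refine Finset.sum_le_sum fun k hk => ?_
        exact Nat.mul_le_mul_left _ (Nat.pow_le_pow_right ha (by simp at hk; omega))
    _ = (∑ k ∈ range (d+1), N.choose k) * a^d := (Finset.sum_mul _ _ _).symm
    _ ≤ (N+1)^d * a^d := Nat.mul_le_mul_right _ (sumChooseLe d N)
    _ = (a * (N+1))^d := by rw [← mul_pow]; ring_nf

lemma sumChoosePowMono (d a N N' : ℕ) (h : N ≤ N') :
    ∑ k ∈ range (d+1), N.choose k * a^k ≤ ∑ k ∈ range (d+1), N'.choose k * a^k :=
  Finset.sum_le_sum fun k _ => Nat.mul_le_mul_right _ (Nat.choose_le_choose k h)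

noncomputable def resF {A B : Type*} [Fintype B] (F : Set (A → B)) (C : Finset A) :
    Finset (↥C → B) :=
  (Set.toFinite ((fun f (x : ↥C) => f ↑x) '' F)).toFinset

lemma mem_resF {A B : Type*} [Fintype B] {F : Set (A → B)} {C : Finset A} {r : ↥C → B} :
    r ∈ resF F C ↔ ∃ f, f ∈ F ∧ ∀ z : ↥C, f ↑z = r z := by
  simp only [resF, Set.Finite.mem_toFinset, Set.mem_image]
  constructor
  · rintro ⟨f, hf, rfl⟩; exact ⟨f, hf, fun z => rfl⟩
  · rintro ⟨f, hf, he⟩; exact ⟨f, hf, funext he⟩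

def restr {A B : Type*} {C C' : Finset A} (h : C' ⊆ C) (r : ↥C → B) : ↥C' → B :=
  fun z => r ⟨↑z, h z.2⟩

noncomputable def v0fun {A B : Type*} [Nonempty B] (F : Set (A → B)) (C' : Finset A)
    (x : A) (r' : ↥C' → B) : B :=
  letI := Classical.propDecidable (∃ f, f ∈ F ∧ ∀ z : ↥C', f ↑z = r' z)
  if h : ∃ f, f ∈ F ∧ ∀ z : ↥C', f ↑z = r' z then h.choose x else Classical.arbitrary B

lemma v0_spec {A B : Type*} [Nonempty B] {F : Set (A → B)} {C' : Finset A} {x : A}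
    {r' : ↥C' → B} (h : ∃ f, f ∈ F ∧ ∀ z : ↥C', f ↑z = r' z) :
    ∃ f, f ∈ F ∧ (∀ z : ↥C', f ↑z = r' z) ∧ f x = v0fun F C' x r' := by
  refine ⟨h.choose, h.choose_spec.1, h.choose_spec.2, ?_⟩
  rw [v0fun, dif_pos h]

def Gcl {A B : Type*} (F : Set (A → B)) (C' : Finset A) (x : A) (y y' : B) :
    Set (A → B) :=
  {f | f ∈ F ∧ f x = y ∧ ∃ g ∈ F, g x = y' ∧ ∀ a ∈ C', g a = f a}

lemma Gcl_shatter {A B : Type*} [DecidableEq A] {F : Set (A → B)} {C : Finset A} {x : A}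
    {y y' : B} (hyy : y ≠ y') {D : Finset A} (hD : D ⊆ C.erase x)
    (hsh : NShatters (Gcl F (C.erase x) x y y') D) : NShatters F (insert x D) := by
  classical
  obtain ⟨h₀, h₁, hne, hsh⟩ := hsh
  refine ⟨Function.update h₀ x y, Function.update h₁ x y', ?_, ?_⟩
  · intro z hz
    rcases Finset.mem_insert.mp hz with rfl | hzD
    · simpa using hyy
    · have hzx : z ≠ x := fun h => (Finset.mem_erase.mp (hD hzD)).1 h
      rw [Function.update_of_ne hzx, Function.update_of_ne hzx]
      exact hne z hzD
  · intro B' hB'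
    by_cases hxB : x ∈ B'
    · obtain ⟨f, hfG, hf0, hf1⟩ := hsh (B'.erase x) (fun w hw => by
        rcases Finset.mem_erase.mp hw with ⟨hwx, hwB⟩
        rcases Finset.mem_insert.mp (hB' hwB) with rfl | h
        · exact absurd rfl hwx
        · exact h)
      refine ⟨f, hfG.1, ?_, ?_⟩
      · intro w hw
        by_cases hwx : w = x
        · subst hwx; rw [Function.update_self]; exact hfG.2.1
        · rw [Function.update_of_ne hwx]
          exact hf0 w (Finset.mem_erase.mpr ⟨hwx, hw⟩)
      · intro w hw hwB
        rcases Finset.mem_insert.mp hw with rfl | hwD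
        · exact absurd hxB hwB
        · have hwx : w ≠ x := fun h => (Finset.mem_erase.mp (hD hwD)).1 h
          rw [Function.update_of_ne hwx]
          exact hf1 w hwD (fun hc => hwB (Finset.mem_of_mem_erase hc))
    · have hB'D : B' ⊆ D := fun w hw => by
        rcases Finset.mem_insert.mp (hB' hw) with rfl | h
        · exact absurd hw hxB
        · exact h
      obtain ⟨f, hfG, hf0, hf1⟩ := hsh B' hB'D
      obtain ⟨hfF, hfx, g, hgF, hgx, hgf⟩ := hfG
      refine ⟨g, hgF, ?_, ?_⟩
      · intro w hw
        have hwC' := hD (hB'D hw)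
        have hwx : w ≠ x := fun h => (Finset.mem_erase.mp hwC').1 h
        rw [Function.update_of_ne hwx, hgf w hwC']
        exact hf0 w hw
      · intro w hw hwB
        rcases Finset.mem_insert.mp hw with rfl | hwD
        · rw [Function.update_self]; exact hgx
        · have hwC' := hD hwD
          have hwx : w ≠ x := fun h => (Finset.mem_erase.mp hwC').1 h
          rw [Function.update_of_ne hwx, hgf w hwC']
          exact hf1 w hwD hwB

theorem natarajan {A B : Type*} [Fintype B] (C : Finset A) :
    ∀ (F : Set (A → B)) (d : ℕ),
      (∀ D ⊆ C, NShatters F D → D.card ≤ d) →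
      (resF F C).card ≤ ∑ k ∈ Finset.range (d+1), C.card.choose k * ((Fintype.card B)^2) ^ k := by
  classical
  induction C using Finset.strongInductionOn with
  | _ C IH =>
  intro F d hd
  have hone : 1 ≤ ∑ k ∈ Finset.range (d+1), C.card.choose k * ((Fintype.card B)^2)^k := by
    have h0 : (0:ℕ) ∈ Finset.range (d+1) := by simp
    have h1 := Finset.single_le_sum (f := fun k => C.card.choose k * ((Fintype.card B)^2)^k)
      (fun k _ => Nat.zero_le _) h0
    simpa using h1
  rcases C.eq_empty_or_nonempty with rfl | ⟨x, hx⟩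
  · haveI : IsEmpty (↥(∅ : Finset A)) := ⟨fun z => Finset.notMem_empty _ z.2⟩
    refine le_trans ?_ hone
    exact Finset.card_le_one.mpr (fun r _ r' _ => Subsingleton.elim r r')
  rcases d with _ | d
  · -- d = 0 : all functions in F agree on C
    refine le_trans ?_ hone
    refine Finset.card_le_one.mpr (fun r₁ h₁ r₂ h₂ => ?_)
    obtain ⟨f₁, hf₁F, hf₁⟩ := mem_resF.mp h₁
    obtain ⟨f₂, hf₂F, hf₂⟩ := mem_resF.mp h₂
    funext z
    rw [← hf₁ z, ← hf₂ z]
    by_contra hne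
    have hsh : NShatters F {(↑z : A)} := by
      refine ⟨f₁, f₂, ?_, ?_⟩
      · intro w hw; rw [Finset.mem_singleton] at hw; subst hw; exact hne
      · intro B' hB'
        rcases Finset.subset_singleton_iff.mp hB' with rfl | rfl
        · exact ⟨f₂, hf₂F, fun w hw => absurd hw (Finset.notMem_empty w),
            fun w _ _ => rfl⟩
        · exact ⟨f₁, hf₁F, fun w _ => rfl, fun w hw hwn => absurd hw hwn⟩
    have := hd {(↑z : A)} (Finset.singleton_subset_iff.mpr z.2) hsh
    simp at this
  · -- d = d+1 : main induction step
    rcases (resF F C).eq_empty_or_nonempty with he | ⟨r₀, hr₀⟩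
    · rw [he]; simp
    haveI : Nonempty B := ⟨r₀ ⟨x, hx⟩⟩
    set C' := C.erase x with hC'def
    have hss : C' ⊂ C := Finset.erase_ssubset hx
    have hsub : C' ⊆ C := Finset.erase_subset x C
    have hcard : C'.card + 1 = C.card := Finset.card_erase_add_one hx
    set xC : ↥C := ⟨x, hx⟩ with hxCdef
    set c2 := (Fintype.card B)^2 with hc2def
    -- determination
    have hdet : ∀ r₁ r₂ : ↥C → B, restr hsub r₁ = restr hsub r₂ → r₁ xC = r₂ xC → r₁ = r₂ := by
      intro r₁ r₂ hres hxv
      funext z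
      by_cases hz : (↑z : A) = x
      · have hzz : z = xC := Subtype.ext hz
        rw [hzz]; exact hxv
      · have hzC' : (↑z : A) ∈ C' := Finset.mem_erase.mpr ⟨hz, z.2⟩
        exact congrFun hres ⟨↑z, hzC'⟩
    set P : (↥C → B) → Prop := fun r => r xC = v0fun F C' x (restr hsub r) with hPdef
    -- part (a)
    have hA : ((resF F C).filter P).card ≤ (resF F C').card := by
      refine Finset.card_le_card_of_injOn (restr hsub) ?_ ?_
      · intro r hr
        rw [Finset.mem_coe, Finset.mem_filter] at hr
        obtain ⟨f, hfF, hf⟩ := mem_resF.mp hr.1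
        exact mem_resF.mpr ⟨f, hfF, fun z => hf ⟨↑z, hsub z.2⟩⟩
      · intro r₁ h₁ r₂ h₂ heq
        rw [Finset.mem_coe, Finset.mem_filter] at h₁ h₂
        exact hdet r₁ r₂ heq (by rw [h₁.2, h₂.2, heq])
    -- part (b)
    have hB : ((resF F C).filter (fun r => ¬ P r)).card
        ≤ ∑ p ∈ (Finset.univ : Finset B).offDiag,
            (resF (Gcl F C' x p.1 p.2) C').card := by
      rw [← Finset.card_sigma]
      refine Finset.card_le_card_of_injOn
        (fun r => ⟨(v0fun F C' x (restr hsub r), r xC), restr hsub r⟩) ?_ ?_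
      · intro r hr
        rw [Finset.mem_coe, Finset.mem_filter] at hr
        obtain ⟨hrs, hne⟩ := hr
        obtain ⟨g, hgF, hg⟩ := mem_resF.mp hrs
        have hEx : ∃ f, f ∈ F ∧ ∀ z : ↥C', f ↑z = restr hsub r z :=
          ⟨g, hgF, fun z => hg ⟨↑z, hsub z.2⟩⟩
        obtain ⟨f, hfF, hfres, hfx⟩ := v0_spec (x := x) hEx
        refine Finset.mem_sigma.mpr ⟨Finset.mem_offDiag.mpr
          ⟨Finset.mem_univ _, Finset.mem_univ _, fun hcon => hne hcon.symm⟩, ?_⟩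
        refine mem_resF.mpr ⟨f, ⟨hfF, hfx, g, hgF, hg xC, ?_⟩, hfres⟩
        intro a haC'
        have h1 := hfres ⟨a, haC'⟩
        have h2 := hg ⟨a, hsub haC'⟩
        exact h2.trans h1.symm
      · intro r₁ h₁ r₂ h₂ heq
        rw [Finset.mem_coe, Finset.mem_filter] at h₁ h₂
        obtain ⟨hp, hr⟩ := Sigma.mk.inj_iff.mp heq
        rw [heq_iff_eq] at hr
        exact hdet r₁ r₂ hr (congrArg Prod.snd hp)
    -- IH applications
    have hIH1 : (resF F C').card
        ≤ ∑ k ∈ Finset.range (d+2), C'.card.choose k * c2 ^ k :=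
      IH C' hss F (d+1) (fun D hD => hd D (hD.trans hsub))
    have hIH2 : ∀ p ∈ (Finset.univ : Finset B).offDiag,
        (resF (Gcl F C' x p.1 p.2) C').card
          ≤ ∑ k ∈ Finset.range (d+1), C'.card.choose k * c2 ^ k := by
      intro p hp
      refine IH C' hss _ d (fun D hD hsh => ?_)
      have hne := (Finset.mem_offDiag.mp hp).2.2
      have hshF : NShatters F (insert x D) := Gcl_shatter hne hD hsh
      have hins : insert x D ⊆ C :=
        Finset.insert_subset hx (hD.trans hsub)
      have hcardD := hd (insert x D) hins hshF
      have hxD : x ∉ D := fun hxD => (Finset.mem_erase.mp (hD hxD)).1 rfl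
      rw [Finset.card_insert_of_notMem hxD] at hcardD
      omega
    -- combine
    have hoff : ((Finset.univ : Finset B).offDiag).card ≤ c2 := by
      rw [Finset.offDiag_card, Finset.card_univ, hc2def, pow_two]
      exact Nat.sub_le _ _
    calc (resF F C).card
        = ((resF F C).filter P).card + ((resF F C).filter (fun r => ¬ P r)).card :=
          (Finset.card_filter_add_card_filter_not (p := P)).symm
      _ ≤ (∑ k ∈ Finset.range (d+2), C'.card.choose k * c2 ^ k)
            + ∑ p ∈ (Finset.univ : Finset B).offDiag,
                (resF (Gcl F C' x p.1 p.2) C').card :=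
          Nat.add_le_add (hA.trans hIH1) hB
      _ ≤ (∑ k ∈ Finset.range (d+2), C'.card.choose k * c2 ^ k)
            + c2 * ∑ k ∈ Finset.range (d+1), C'.card.choose k * c2 ^ k := by
          refine Nat.add_le_add_left ?_ _
          calc ∑ p ∈ (Finset.univ : Finset B).offDiag,
                (resF (Gcl F C' x p.1 p.2) C').card
              ≤ ∑ _p ∈ (Finset.univ : Finset B).offDiag,
                  ∑ k ∈ Finset.range (d+1), C'.card.choose k * c2 ^ k :=
                Finset.sum_le_sum hIH2
            _ = ((Finset.univ : Finset B).offDiag).card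
                  * ∑ k ∈ Finset.range (d+1), C'.card.choose k * c2 ^ k := by
                rw [Finset.sum_const, smul_eq_mul]
            _ ≤ c2 * ∑ k ∈ Finset.range (d+1), C'.card.choose k * c2 ^ k :=
                Nat.mul_le_mul_right _ hoff
      _ = ∑ k ∈ Finset.range (d+2), (C'.card+1).choose k * c2 ^ k :=
          (pascalSum C'.card d c2).symm
      _ = ∑ k ∈ Finset.range (d+2), C.card.choose k * c2 ^ k := by rw [hcard]


lemma numfinish (m S : ℝ) (hm0 : 0 ≤ m)
    (hsum : m * Real.log 2 ≤ S + (m+1)/Real.exp 1)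
    (hS2 : 2*Real.log 2 ≤ S) : m ≤ 4*S := by
  have hL := Real.log_two_gt_d9
  have hEgt := Real.exp_one_gt_d9
  have hE1 : (0:ℝ) < Real.exp 1 := Real.exp_pos 1
  have hEinv : (Real.exp 1)⁻¹ < 0.36788 := by
    have h1 : (Real.exp 1)⁻¹ < (2.7182818283:ℝ)⁻¹ := by
      apply inv_strictAnti₀ (by norm_num) hEgt
    have h2 : ((2.7182818283:ℝ))⁻¹ < 0.36788 := by norm_num
    linarith
  have hEinv0 : (0:ℝ) < (Real.exp 1)⁻¹ := by positivity
  rw [div_eq_mul_inv] at hsum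
  have h3 : m * (Real.log 2 - (Real.exp 1)⁻¹) ≤ S + (Real.exp 1)⁻¹ := by nlinarith [hsum]
  have h4' : m * 0.3252 ≤ m * (Real.log 2 - (Real.exp 1)⁻¹) := by
    apply mul_le_mul_of_nonneg_left _ hm0
    linarith
  have h4 : m * 0.3252 ≤ S + 0.36788 := by linarith
  linarith


/-- VC dimension bound for the binary class induced by `n` multiclass classifier
classes `F i` (with Natarajan dimension `≤ d i`, label spaces of size `c i`,
`M i` instances each) composed with a fixed transition `σ`. -/
theorem stmt11 {n : ℕ} {X Y : Fin n → Type*} {S : Type*} [DecidableEq S]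
    [∀ i, Fintype (Y i)]
    (Mi : Fin n → ℕ) (c : Fin n → ℕ) (hc : ∀ i, Fintype.card (Y i) = c i)
    (σ : (∀ i, Fin (Mi i) → Y i) → S)
    (F : ∀ i, Set (X i → Y i)) (d : Fin n → ℕ)
    (hd : ∀ i, ∀ C : Finset (X i), NShatters (F i) C → C.card ≤ d i) :
    ∀ C : Finset ((∀ i, Fin (Mi i) → X i) × S),
      BShatters {h | ∃ f : ∀ i, X i → Y i, (∀ i, f i ∈ F i) ∧
          h = fun p => decide (σ (fun i j => f i (p.1 i j)) ≠ p.2)} C →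
        (C.card : ℝ)
          ≤ 4 * ∑ i, ((d i : ℝ) * Real.log (Mi i * n * d i)
              + 2 * (d i : ℝ) * Real.log (c i)) := by
  classical
  intro C hC
  set P : ∀ i : Fin n, Finset (X i) := fun i =>
    C.biUnion (fun p => Finset.image (fun j => p.1 i j) Finset.univ) with hPdef
  have hPcard : ∀ i, (P i).card ≤ Mi i * C.card := by
    intro i
    calc (P i).card ≤ ∑ p ∈ C, (Finset.image (fun j => p.1 i j) Finset.univ).card :=
        Finset.card_biUnion_le
      _ ≤ ∑ _p ∈ C, Mi i := Finset.sum_le_sum (fun p _ =>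
          (Finset.card_image_le).trans (by simp))
      _ = C.card * Mi i := by rw [Finset.sum_const, smul_eq_mul]
      _ = Mi i * C.card := Nat.mul_comm _ _
  have hmemP : ∀ (p : ↥C) (i : Fin n) (j : Fin (Mi i)), p.val.1 i j ∈ P i := by
    intro p i j
    exact Finset.mem_biUnion.mpr ⟨↑p, p.2, Finset.mem_image.mpr ⟨j, Finset.mem_univ _, rfl⟩⟩
  have key : ∀ b : ↥C → Bool, ∃ f : ∀ i, X i → Y i, (∀ i, f i ∈ F i) ∧
      ∀ p : ↥C, decide (σ (fun i j => f i (p.val.1 i j)) ≠ p.val.2) = b p := by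
    intro b
    obtain ⟨h, hH, hag⟩ := hC (fun p => if hp : p ∈ C then b ⟨p, hp⟩ else false)
    simp only [Set.mem_setOf_eq] at hH
    obtain ⟨f, hfF, rfl⟩ := hH
    refine ⟨f, hfF, fun p => ?_⟩
    have h1 := hag ↑p p.2
    exact h1.trans (dif_pos p.2)
  choose fb hfb1 hfb2 using key
  have hcount : 2 ^ C.card ≤ ∏ i, (resF (F i) (P i)).card := by
    have hinj : Set.InjOn (fun (b : ↥C → Bool) => (fun i (z : ↥(P i)) => fb b i ↑z))
        ↑(Finset.univ : Finset (↥C → Bool)) := by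
      intro b₁ _ b₂ _ heq
      funext p
      have e : (fun i j => fb b₁ i (p.val.1 i j)) = (fun i j => fb b₂ i (p.val.1 i j)) := by
        funext i j
        exact congrFun (congrFun heq i) ⟨p.val.1 i j, hmemP p i j⟩
      rw [← hfb2 b₁ p, ← hfb2 b₂ p, e]
    have hmt : ∀ b ∈ (Finset.univ : Finset (↥C → Bool)),
        (fun i (z : ↥(P i)) => fb b i ↑z) ∈ Fintype.piFinset (fun i => resF (F i) (P i)) := by
      intro b _
      rw [Fintype.mem_piFinset]
      intro i
      exact mem_resF.mpr ⟨fb b i, hfb1 b i, fun z => rfl⟩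
    have h2 := Finset.card_le_card_of_injOn _ hmt hinj
    rwa [Finset.card_univ, Fintype.card_fun, Fintype.card_coe, Fintype.card_bool,
      Fintype.card_piFinset] at h2
  set Gi : Fin n → ℕ := fun i => (resF (F i) (P i)).card with hGidef
  have hGpos : ∀ i, 1 ≤ Gi i := by
    intro i
    by_contra h
    have h0 : Gi i = 0 := by omega
    have hz : (∏ i, Gi i) = 0 := Finset.prod_eq_zero (Finset.mem_univ i) h0
    have h2 := hcount
    rw [hz] at h2
    have := Nat.one_le_two_pow (n := C.card)
    omega
  have hGone : ∀ i, (c i ≤ 1 ∨ d i = 0 ∨ Mi i = 0) → Gi i ≤ 1 := by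
    intro i hcase
    rcases hcase with h | h | h
    · haveI : Subsingleton (Y i) :=
        Fintype.card_le_one_iff_subsingleton.mp (by rw [hc i]; exact h)
      exact Finset.card_le_one.mpr (fun a _ b _ => Subsingleton.elim a b)
    · have h1 := natarajan (P i) (F i) (d i) (fun D _ hsh => hd i D hsh)
      rw [h] at h1
      simpa using h1
    · have hP0 : P i = ∅ := Finset.eq_empty_of_forall_notMem (fun a ha => by
        obtain ⟨p, hp, hima⟩ := Finset.mem_biUnion.mp ha
        obtain ⟨j, _, _⟩ := Finset.mem_image.mp hima
        exact (h ▸ j).elim0)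
      haveI : IsEmpty (↥(P i)) := Finset.isEmpty_coe_sort.mpr hP0
      exact Finset.card_le_one.mpr (fun a _ b _ => Subsingleton.elim a b)
  have hNat : ∀ i, 2 ≤ c i → 1 ≤ d i → 1 ≤ Mi i →
      Gi i ≤ (c i ^ 2 * (Mi i * (C.card + 1))) ^ (d i) := by
    intro i hci hdi hMi
    have h1 := natarajan (P i) (F i) (d i) (fun D _ hsh => hd i D hsh)
    rw [hc i] at h1
    have h2 := sumChoosePowMono (d i) (c i ^ 2) _ _ (hPcard i)
    have h3 := sumChoosePowLe (d i) (Mi i * C.card) (c i ^ 2) (by nlinarith)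
    have h4 : c i ^ 2 * (Mi i * C.card + 1) ≤ c i ^ 2 * (Mi i * (C.card + 1)) := by
      have h5 : Mi i * C.card + 1 ≤ Mi i * (C.card + 1) := by nlinarith
      exact Nat.mul_le_mul_left _ h5
    calc Gi i ≤ _ := h1
      _ ≤ _ := h2
      _ ≤ (c i ^ 2 * (Mi i * C.card + 1)) ^ (d i) := h3
      _ ≤ (c i ^ 2 * (Mi i * (C.card + 1))) ^ (d i) := Nat.pow_le_pow_left h4 _
  set Sm : ℝ := ∑ i, ((d i : ℝ) * Real.log (Mi i * n * d i)
      + 2 * (d i : ℝ) * Real.log (c i)) with hSmdef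
  have hT0 : ∀ i : Fin n, 0 ≤ (d i : ℝ) * Real.log (Mi i * n * d i)
      + 2 * (d i : ℝ) * Real.log (c i) := by
    intro i
    have e1 : ((Mi i : ℝ) * n * d i) = ((Mi i * n * d i : ℕ) : ℝ) := by push_cast; ring
    have h1 : 0 ≤ Real.log ((Mi i : ℝ) * n * d i) := by
      rw [e1]; exact Real.log_natCast_nonneg _
    have h2 : 0 ≤ Real.log (c i) := Real.log_natCast_nonneg _
    have h3 : (0:ℝ) ≤ d i := Nat.cast_nonneg _
    positivity
  have hSm0 : 0 ≤ Sm := Finset.sum_nonneg (fun i _ => hT0 i)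
  have hE1 : (0:ℝ) < Real.exp 1 := Real.exp_pos 1
  by_cases hact : ∃ i, 2 ≤ c i ∧ 1 ≤ d i ∧ 1 ≤ Mi i
  · obtain ⟨i₀, hci₀, hdi₀, hMi₀⟩ := hact
    have hn1 : (1:ℝ) ≤ (n:ℝ) := by exact_mod_cast i₀.pos
    have hn0 : (n:ℝ) ≠ 0 := by linarith
    -- per-index logarithmic bound
    have hlog : ∀ i, Real.log (Gi i) ≤
        ((d i : ℝ) * Real.log (Mi i * n * d i) + 2 * (d i : ℝ) * Real.log (c i))
          + ((C.card:ℝ)+1) / (Real.exp 1 * n) := by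
      intro i
      have hposfrac : 0 ≤ ((C.card:ℝ)+1) / (Real.exp 1 * n) := by positivity
      by_cases hacti : 2 ≤ c i ∧ 1 ≤ d i ∧ 1 ≤ Mi i
      · obtain ⟨hci, hdi, hMi⟩ := hacti
        have hGle := hNat i hci hdi hMi
        have hcpos : (0:ℝ) < (c i : ℝ) := by exact_mod_cast (by omega : 0 < c i)
        have hMpos : (0:ℝ) < (Mi i : ℝ) := by exact_mod_cast (by omega : 0 < Mi i)
        have hdpos : (0:ℝ) < (d i : ℝ) := by exact_mod_cast (by omega : 0 < d i)
        have hmpos : (0:ℝ) < (C.card:ℝ)+1 := by positivity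
        have hG0 : (0:ℝ) < (Gi i : ℝ) := by exact_mod_cast hGpos i
        have hlog1 : Real.log (Gi i)
            ≤ (d i : ℝ) * (2 * Real.log (c i) + Real.log ((Mi i:ℝ) * ((C.card:ℝ)+1))) := by
          have hcast : (((c i ^ 2 * (Mi i * (C.card + 1))) ^ (d i) : ℕ) : ℝ)
              = ((c i:ℝ)^2 * ((Mi i:ℝ) * ((C.card:ℝ)+1)))^(d i) := by push_cast; ring
          have hle : Real.log (Gi i)
              ≤ Real.log ((((c i ^ 2 * (Mi i * (C.card + 1))) ^ (d i) : ℕ) : ℝ)) :=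
            Real.log_le_log hG0 (by exact_mod_cast hGle)
          rw [hcast, Real.log_pow, Real.log_mul (by positivity) (by positivity),
            Real.log_pow] at hle
          calc Real.log (Gi i) ≤ _ := hle
            _ = (d i : ℝ) * (2 * Real.log (c i) + Real.log ((Mi i:ℝ) * ((C.card:ℝ)+1))) := by
              push_cast
              ring
        -- tangent line bound
        have hs : (0:ℝ) < (Mi i:ℝ) * (n:ℝ) * (d i:ℝ) := by positivity
        have ht : (0:ℝ) < (Mi i:ℝ) * ((C.card:ℝ)+1) := by positivity
        have htan := Real.log_le_sub_one_of_pos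
          (show (0:ℝ) < ((Mi i:ℝ) * ((C.card:ℝ)+1)) / (Real.exp 1 * ((Mi i:ℝ)*(n:ℝ)*(d i:ℝ)))
            by positivity)
        rw [Real.log_div ht.ne' (by positivity), Real.log_mul hE1.ne' hs.ne',
          Real.log_exp] at htan
        have hfrac : ((Mi i:ℝ) * ((C.card:ℝ)+1)) / (Real.exp 1 * ((Mi i:ℝ)*(n:ℝ)*(d i:ℝ)))
            = ((C.card:ℝ)+1) / (Real.exp 1 * (n:ℝ) * (d i:ℝ)) := by
          field_simp
        rw [hfrac] at htan
        have h2 : Real.log ((Mi i:ℝ) * ((C.card:ℝ)+1))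
            ≤ Real.log ((Mi i:ℝ)*(n:ℝ)*(d i:ℝ))
              + ((C.card:ℝ)+1) / (Real.exp 1 * (n:ℝ) * (d i:ℝ)) := by linarith
        have h3 : (d i : ℝ) * (2 * Real.log (c i) + Real.log ((Mi i:ℝ) * ((C.card:ℝ)+1)))
            ≤ (d i : ℝ) * (2 * Real.log (c i) + (Real.log ((Mi i:ℝ)*(n:ℝ)*(d i:ℝ))
              + ((C.card:ℝ)+1) / (Real.exp 1 * (n:ℝ) * (d i:ℝ)))) :=
          mul_le_mul_of_nonneg_left (by linarith) (le_of_lt hdpos)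
        have hdiv : (d i:ℝ) * (((C.card:ℝ)+1) / (Real.exp 1 * (n:ℝ) * (d i:ℝ)))
            = ((C.card:ℝ)+1)/(Real.exp 1 * (n:ℝ)) := by
          field_simp
        calc Real.log (Gi i) ≤ _ := hlog1
          _ ≤ _ := h3
          _ = (d i:ℝ) * Real.log ((Mi i:ℝ)*(n:ℝ)*(d i:ℝ)) + 2*(d i:ℝ)*Real.log (c i)
              + (d i:ℝ) * (((C.card:ℝ)+1) / (Real.exp 1 * (n:ℝ) * (d i:ℝ))) := by ring
          _ = _ := by rw [hdiv]
      · have hcase : c i ≤ 1 ∨ d i = 0 ∨ Mi i = 0 := by omega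
        have hG1 : Gi i = 1 := le_antisymm (hGone i hcase) (hGpos i)
        rw [hG1]
        simp only [Nat.cast_one, Real.log_one]
        linarith [hT0 i]
    -- summing the logarithms
    have hsum : (C.card:ℝ) * Real.log 2 ≤ Sm + ((C.card:ℝ)+1)/Real.exp 1 := by
      have hcastlog : (C.card:ℝ) * Real.log 2 = Real.log (((2^C.card : ℕ) : ℝ)) := by
        push_cast
        rw [Real.log_pow]
      have hlm : Real.log (((2^C.card : ℕ) : ℝ)) ≤ Real.log (((∏ i, Gi i : ℕ) : ℝ)) :=
        Real.log_le_log (by positivity) (by exact_mod_cast hcount)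
      have hlp : Real.log (((∏ i, Gi i : ℕ) : ℝ)) = ∑ i, Real.log (Gi i) := by
        rw [Nat.cast_prod]
        exact Real.log_prod (fun i _ =>
          Nat.cast_ne_zero.mpr (by have := hGpos i; omega))
      have hsum1 : ∑ i, Real.log (Gi i)
          ≤ Sm + ∑ _i : Fin n, ((C.card:ℝ)+1)/(Real.exp 1 * n) := by
        rw [hSmdef, ← Finset.sum_add_distrib]
        exact Finset.sum_le_sum (fun i _ => hlog i)
      have hconst : ∑ _i : Fin n, ((C.card:ℝ)+1)/(Real.exp 1 * n)
          = ((C.card:ℝ)+1)/Real.exp 1 := by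
        rw [Finset.sum_const, Finset.card_univ, Fintype.card_fin, nsmul_eq_mul]
        field_simp
      rw [hcastlog, ← hconst]
      calc Real.log (((2^C.card : ℕ) : ℝ)) ≤ _ := hlm
        _ = _ := hlp
        _ ≤ _ := hsum1
    -- lower bound on Sm
    have hS2 : 2 * Real.log 2 ≤ Sm := by
      have hlogc : Real.log 2 ≤ Real.log (c i₀) := by
        apply Real.log_le_log (by norm_num)
        exact_mod_cast hci₀
      have hlog20 : 0 < Real.log 2 := Real.log_pos (by norm_num)
      have hd1 : (1:ℝ) ≤ (d i₀ : ℝ) := by exact_mod_cast hdi₀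
      have e1 : ((Mi i₀ : ℝ) * n * d i₀) = ((Mi i₀ * n * d i₀ : ℕ) : ℝ) := by push_cast; ring
      have hlogM : 0 ≤ Real.log ((Mi i₀ : ℝ) * n * d i₀) := by
        rw [e1]; exact Real.log_natCast_nonneg _
      have hTi : 2 * Real.log 2 ≤ (d i₀ : ℝ) * Real.log (Mi i₀ * n * d i₀)
          + 2 * (d i₀ : ℝ) * Real.log (c i₀) := by
        nlinarith
      calc 2 * Real.log 2 ≤ _ := hTi
        _ ≤ Sm := Finset.single_le_sum (fun i _ => hT0 i) (Finset.mem_univ i₀)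
    exact numfinish _ _ (Nat.cast_nonneg _) hsum hS2
  · -- no active index : C must be empty
    have hGall : ∀ i ∈ (Finset.univ : Finset (Fin n)), Gi i ≤ 1 := by
      intro i _
      refine hGone i ?_
      have : ¬ (2 ≤ c i ∧ 1 ≤ d i ∧ 1 ≤ Mi i) := fun hcon => hact ⟨i, hcon⟩
      omega
    have hprodle1 : ∏ i, Gi i ≤ 1 := Finset.prod_le_one (fun i hi => Nat.zero_le _) hGall
    have hle1 : 2 ^ C.card ≤ 1 := le_trans hcount hprodle1
    have hm0 : C.card = 0 := by
      by_contra hne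
      have h2 : 1 < 2 ^ C.card := Nat.one_lt_two_pow_iff.mpr hne
      omega
    rw [hm0]
    simp only [Nat.cast_zero]
    linarith
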